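/- Let 𝒜 be a finite alphabet with d ≥ 2 symbols, let π = (π₀, π₁) be an irreducible combinatorial data on 𝒜, let ε ∈ {0,1}, and let π' = r_ε(π). Then Θ_{π,ε}⁻¹(C^s_{π'}) ⊆ C^s_π, where C^s_π = Ω_π(ℝ^𝒜_{>0}) is the image under Ω_π of the set of vectors with all coordinates positive. -/

import Mathlib

open Matrix

/-- The top element of `Fin d` (corresponding to the value `d` in `{1, …, d}`). -/
def finTop (d : ℕ) (hd : 0 < d) : Fin d := ⟨d - 1, by omega⟩

/-- The matrix `Ω_π` associated to the combinatorial data `π = (p0, p1)`. -/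
def rvOmega {A : Type*} [Fintype A] (d : ℕ) (p0 p1 : A ≃ Fin d) :
    Matrix A A ℝ :=
  Matrix.of fun α β =>
    if p1 β < p1 α ∧ p0 α < p0 β then (1 : ℝ)
    else if p1 α < p1 β ∧ p0 β < p0 α then -1
    else 0

/-- The combinatorial data `π = (p0, p1)` is irreducible. -/
def rvIrreducible {A : Type*} (d : ℕ) (p0 p1 : A ≃ Fin d) : Prop :=
  ∀ j : ℕ, 1 ≤ j → j ≤ d - 1 →
    {α : A | (p0 α : ℕ) < j} ≠ {α : A | (p1 α : ℕ) < j}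

/-- The Rauzy–Veech update of the loser-side permutation; `e = π_ε` (winner side),
`f = π_{1−ε}` (the side being updated). -/
def rvUpdate {A : Type*} (d : ℕ) (hd : 0 < d) (e f : A ≃ Fin d) (α : A) : Fin d :=
  haveI : NeZero d := ⟨hd.ne'⟩
  if f α ≤ f (e.symm (finTop d hd)) then f α
  else if f α < finTop d hd then f α + 1
  else f (e.symm (finTop d hd)) + 1

/-- The Rauzy–Veech matrix `Θ_{π,ε} = I + E_{α(1−ε), α(ε)}`. -/
def rvTheta {A : Type*} [Fintype A] [DecidableEq A] (d : ℕ) (hd : 0 < d)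
    (e f : A ≃ Fin d) : Matrix A A ℝ :=
  1 + Matrix.single (f.symm (finTop d hd)) (e.symm (finTop d hd)) 1

/-- The stable cone `C^s_π = Ω_π(ℝ^𝒜_{>0})`. -/
def rvConeS {A : Type*} [Fintype A] (d : ℕ) (p0 p1 : A ≃ Fin d) : Set (A → ℝ) :=
  (rvOmega d p0 p1).mulVec '' {u : A → ℝ | ∀ α, 0 < u α}

section rvHelpers

set_option maxHeartbeats 2000000
set_option linter.unusedSectionVars false

variable {A : Type*} [Fintype A] [DecidableEq A] {d : ℕ}

lemma finval_add_one (hd2 : 2 ≤ d) [NeZero d] (x : Fin d) (h : x.val + 1 < d) :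
    ((x + 1 : Fin d)).val = x.val + 1 := by
  rw [Fin.val_add, Fin.val_one', Nat.mod_eq_of_lt hd2, Nat.mod_eq_of_lt h]

lemma key_entry (hd2 : 2 ≤ d) (hd0 : 0 < d) (e f f' : A ≃ Fin d)
    (hf' : ∀ γ, f' γ = rvUpdate d hd0 e f γ)
    (hwl : e.symm (finTop d hd0) ≠ f.symm (finTop d hd0)) (α β : A) :
    rvOmega d e f' α β = rvOmega d e f α β
      + (if α = f.symm (finTop d hd0) then rvOmega d e f (e.symm (finTop d hd0)) β else 0)
      + (if β = f.symm (finTop d hd0) then rvOmega d e f α (e.symm (finTop d hd0)) else 0) := by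
  haveI : NeZero d := ⟨hd0.ne'⟩
  have hlw' : f.symm (finTop d hd0) ≠ e.symm (finTop d hd0) := Ne.symm hwl
  have hTop : ((finTop d hd0 : Fin d) : ℕ) = d - 1 := rfl
  -- value of f at winner is below top
  have hwv : (f (e.symm (finTop d hd0)) : ℕ) < d - 1 := by
    have h1 : f (e.symm (finTop d hd0)) ≠ finTop d hd0 := by
      intro h
      exact hwl (by rw [← f.symm_apply_apply (e.symm (finTop d hd0)), h])
    have h2 : (f (e.symm (finTop d hd0)) : ℕ) < d := (f _).isLt
    have h3 : (f (e.symm (finTop d hd0)) : ℕ) ≠ d - 1 := by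
      intro h; exact h1 (Fin.val_injective (by rw [h, hTop]))
    omega
  have hElw : (e (f.symm (finTop d hd0)) : ℕ) < d - 1 := by
    have h1 : e (f.symm (finTop d hd0)) ≠ finTop d hd0 := by
      intro h
      exact hwl (by rw [← e.symm_apply_apply (f.symm (finTop d hd0)), h])
    have h2 : (e (f.symm (finTop d hd0)) : ℕ) < d := (e _).isLt
    have h3 : (e (f.symm (finTop d hd0)) : ℕ) ≠ d - 1 := by
      intro h; exact h1 (Fin.val_injective (by rw [h, hTop]))
    omega
  -- value of f' at the loser
  have hvl : ((f' (f.symm (finTop d hd0))) : ℕ) = (f (e.symm (finTop d hd0)) : ℕ) + 1 := by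
    rw [hf']
    simp only [rvUpdate]
    rw [if_neg, if_neg]
    · exact finval_add_one hd2 _ (by omega)
    · simp only [Fin.lt_def, Equiv.apply_symm_apply, hTop]; omega
    · simp only [Fin.le_def, Equiv.apply_symm_apply, hTop]; omega
  -- value of f' away from the loser
  have hvne : ∀ γ, γ ≠ f.symm (finTop d hd0) →
      ((f' γ) : ℕ) = if (f γ : ℕ) ≤ (f (e.symm (finTop d hd0)) : ℕ) then (f γ : ℕ)
        else (f γ : ℕ) + 1 := by
    intro γ hγ
    have hb : (f γ : ℕ) < d := (f γ).isLt
    have hne : (f γ : ℕ) ≠ d - 1 := by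
      intro h
      exact hγ (by rw [← f.symm_apply_apply γ]; congr 1; exact Fin.val_injective (by rw [h, hTop]))
    rw [hf']
    simp only [rvUpdate]
    by_cases h1 : f γ ≤ f (e.symm (finTop d hd0))
    · rw [if_pos h1, if_pos (Fin.le_def.mp h1)]
    · rw [if_neg h1, if_neg (fun h => h1 (Fin.le_def.mpr h)), if_pos]
      · exact finval_add_one hd2 _ (by omega)
      · simp only [Fin.lt_def, hTop]; omega
  have B1 : (f α : ℕ) < d := (f α).isLt
  have B2 : (f β : ℕ) < d := (f β).isLt
  have B3 : (e α : ℕ) < d := (e α).isLt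
  have B4 : (e β : ℕ) < d := (e β).isLt
  have hd2' : 2 ≤ d := hd2
  by_cases hab : α = β <;> by_cases hal : α = f.symm (finTop d hd0) <;>
    by_cases hbl : β = f.symm (finTop d hd0) <;> by_cases haw : α = e.symm (finTop d hd0) <;>
    by_cases hbw : β = e.symm (finTop d hd0)
  all_goals try exact absurd (hal.symm.trans haw) hlw'
  all_goals try exact absurd (hbl.symm.trans hbw) hlw'
  all_goals try exact absurd (hab.symm.trans hal) hbl
  all_goals try exact absurd (hab.symm.trans haw) hbw
  all_goals try exact absurd (hab.trans hbl) hal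
  all_goals try exact absurd (hab.trans hbw) haw
  all_goals try exact absurd (hal.trans hbl.symm) hab
  all_goals try exact absurd (haw.trans hbw.symm) hab
  all_goals (
    try have k1 : (f α : ℕ) ≠ d - 1 := fun h =>
      hal (by rw [← f.symm_apply_apply α]; congr 1; exact Fin.val_injective (by rw [h, hTop]))
    try have k2 : (e α : ℕ) ≠ (e (f.symm (finTop d hd0)) : ℕ) := fun h =>
      hal (e.injective (Fin.val_injective h))
    try have k3 : (f α : ℕ) ≠ (f (e.symm (finTop d hd0)) : ℕ) := fun h =>
      haw (f.injective (Fin.val_injective h))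
    try have k4 : (e α : ℕ) ≠ d - 1 := fun h =>
      haw (by rw [← e.symm_apply_apply α]; congr 1; exact Fin.val_injective (by rw [h, hTop]))
    try have k5 : (f β : ℕ) ≠ d - 1 := fun h =>
      hbl (by rw [← f.symm_apply_apply β]; congr 1; exact Fin.val_injective (by rw [h, hTop]))
    try have k6 : (e β : ℕ) ≠ (e (f.symm (finTop d hd0)) : ℕ) := fun h =>
      hbl (e.injective (Fin.val_injective h))
    try have k7 : (f β : ℕ) ≠ (f (e.symm (finTop d hd0)) : ℕ) := fun h =>
      hbw (f.injective (Fin.val_injective h))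
    try have k8 : (e β : ℕ) ≠ d - 1 := fun h =>
      hbw (by rw [← e.symm_apply_apply β]; congr 1; exact Fin.val_injective (by rw [h, hTop]))
    try have k9 : (f α : ℕ) ≠ (f β : ℕ) := fun h => hab (f.injective (Fin.val_injective h))
    try have k10 : (e α : ℕ) ≠ (e β : ℕ) := fun h => hab (e.injective (Fin.val_injective h))
    simp only [hab, hal, hbl, haw, hbw, hlw', hwl, eq_self_iff_true, if_true, if_false,
      ite_true, ite_false, not_false_iff]
    simp only [rvOmega, Matrix.of_apply, Fin.lt_def, Equiv.apply_symm_apply, hTop]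
    try simp only [hvl]
    try simp only [hvne α hal]
    try simp only [hvne β hbl]
    try simp only [hvne (e.symm (finTop d hd0)) hwl]
    split_ifs <;> first | (exfalso; omega) | norm_num | contradiction)

lemma stdMul (i j : A) (c : ℝ) (M : Matrix A A ℝ) (a b : A) :
    (Matrix.single i j c * M) a b = if a = i then c * M j b else 0 := by
  by_cases h : a = i
  · subst h; simp [Matrix.mul_apply, Matrix.single, ite_and]
  · rw [if_neg h]; simp [Matrix.mul_apply, Matrix.single, ite_and, Ne.symm h]

lemma mulStd (i j : A) (c : ℝ) (M : Matrix A A ℝ) (a b : A) :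
    (M * Matrix.single i j c) a b = if b = j then M a i * c else 0 := by
  by_cases h : b = j
  · subst h; simp [Matrix.mul_apply, Matrix.single, ite_and]
  · rw [if_neg h]; simp [Matrix.mul_apply, Matrix.single, ite_and, Ne.symm h]

lemma stdT (i j : A) (c : ℝ) :
    (Matrix.single i j c)ᵀ = Matrix.single j i c := by
  ext a b
  simp [Matrix.single, Matrix.transpose_apply, and_comm]

lemma stdMulVec (i j : A) (c : ℝ) (u : A → ℝ) (a : A) :
    (Matrix.single i j c).mulVec u a = if a = i then c * u j else 0 := by
  by_cases h : a = i
  · subst h; simp [Matrix.mulVec, Matrix.single, dotProduct, ite_and]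
  · rw [if_neg h]
    simp [Matrix.mulVec, Matrix.single, dotProduct, ite_and, Ne.symm h]

lemma cone_step (hd0 : 0 < d) (p0 p1 e f : A ≃ Fin d)
    (hwl : e.symm (finTop d hd0) ≠ f.symm (finTop d hd0))
    (M' : Matrix A A ℝ)
    (hM' : M' = rvTheta d hd0 e f * rvOmega d p0 p1 * (rvTheta d hd0 e f)ᵀ)
    (u : A → ℝ) (hu : ∀ a, 0 < u a) :
    (rvTheta d hd0 e f)⁻¹.mulVec (M'.mulVec u) ∈ rvConeS d p0 p1 := by
  have hS : Matrix.single (f.symm (finTop d hd0)) (e.symm (finTop d hd0)) (1:ℝ) *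
      Matrix.single (f.symm (finTop d hd0)) (e.symm (finTop d hd0)) 1 = 0 :=
    Matrix.single_mul_single_of_ne (h := hwl) ..
  have hth : rvTheta d hd0 e f =
      1 + Matrix.single (f.symm (finTop d hd0)) (e.symm (finTop d hd0)) 1 := rfl
  have hleft : (1 - Matrix.single (f.symm (finTop d hd0)) (e.symm (finTop d hd0)) (1:ℝ)) *
      rvTheta d hd0 e f = 1 := by
    rw [hth]
    have : (1 - Matrix.single (f.symm (finTop d hd0)) (e.symm (finTop d hd0)) (1:ℝ)) *
        (1 + Matrix.single (f.symm (finTop d hd0)) (e.symm (finTop d hd0)) 1)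
        = 1 - Matrix.single (f.symm (finTop d hd0)) (e.symm (finTop d hd0)) (1:ℝ) *
            Matrix.single (f.symm (finTop d hd0)) (e.symm (finTop d hd0)) 1 := by
      noncomm_ring
    rw [this, hS, sub_zero]
  have hinv : (rvTheta d hd0 e f)⁻¹ =
      1 - Matrix.single (f.symm (finTop d hd0)) (e.symm (finTop d hd0)) 1 :=
    Matrix.inv_eq_left_inv hleft
  rw [Matrix.mulVec_mulVec, hinv, hM', ← Matrix.mul_assoc, ← Matrix.mul_assoc, hleft,
    Matrix.one_mul, ← Matrix.mulVec_mulVec]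
  refine ⟨(rvTheta d hd0 e f)ᵀ.mulVec u, fun a => ?_, rfl⟩
  rw [hth, Matrix.transpose_add, Matrix.transpose_one, stdT]
  rw [Matrix.add_mulVec, Matrix.one_mulVec]
  simp only [Pi.add_apply, stdMulVec]
  have := hu a
  have := hu (f.symm (finTop d hd0))
  split_ifs <;> [linarith; linarith]

lemma omega_diag (e f : A ≃ Fin d) (a : A) : rvOmega d e f a a = 0 := by
  simp [rvOmega]

lemma omega_swap (p q : A ≃ Fin d) : rvOmega d p q = - rvOmega d q p := by
  ext a b
  simp only [rvOmega, Matrix.of_apply, Matrix.neg_apply, Fin.lt_def]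
  split_ifs <;> first | (exfalso; omega) | norm_num

lemma key (hd2 : 2 ≤ d) (hd0 : 0 < d) (e f f' : A ≃ Fin d)
    (hf' : ∀ γ, f' γ = rvUpdate d hd0 e f γ)
    (hwl : e.symm (finTop d hd0) ≠ f.symm (finTop d hd0)) :
    rvOmega d e f' = rvTheta d hd0 e f * rvOmega d e f * (rvTheta d hd0 e f)ᵀ := by
  have hth : rvTheta d hd0 e f =
      1 + Matrix.single (f.symm (finTop d hd0)) (e.symm (finTop d hd0)) 1 := rfl
  have expand : rvTheta d hd0 e f * rvOmega d e f * (rvTheta d hd0 e f)ᵀ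
      = rvOmega d e f
        + Matrix.single (f.symm (finTop d hd0)) (e.symm (finTop d hd0)) 1 * rvOmega d e f
        + rvOmega d e f * (Matrix.single (f.symm (finTop d hd0)) (e.symm (finTop d hd0)) 1)ᵀ
        + Matrix.single (f.symm (finTop d hd0)) (e.symm (finTop d hd0)) 1 *
            (rvOmega d e f * (Matrix.single (f.symm (finTop d hd0)) (e.symm (finTop d hd0)) 1)ᵀ) := by
    rw [hth, Matrix.transpose_add, Matrix.transpose_one]
    noncomm_ring
  ext a b
  rw [expand, key_entry hd2 hd0 e f f' hf' hwl a b]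
  simp only [Matrix.add_apply, stdT, stdMul, mulStd, omega_diag, mul_one, one_mul]
  split_ifs <;> ring

lemma key' (hd2 : 2 ≤ d) (hd0 : 0 < d) (e f f' : A ≃ Fin d)
    (hf' : ∀ γ, f' γ = rvUpdate d hd0 e f γ)
    (hwl : e.symm (finTop d hd0) ≠ f.symm (finTop d hd0)) :
    rvOmega d f' e = rvTheta d hd0 e f * rvOmega d f e * (rvTheta d hd0 e f)ᵀ := by
  rw [omega_swap f' e, key hd2 hd0 e f f' hf' hwl, omega_swap f e]
  simp only [Matrix.neg_mul, Matrix.mul_neg]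

end rvHelpers

/-- Let `π` be an irreducible combinatorial data on an alphabet with
`d ≥ 2` symbols, `ε ∈ {0,1}` and `π' = r_ε(π)`.  Then
`Θ_{π,ε}⁻¹ (C^s_{π'}) ⊆ C^s_π`. -/
theorem stmt17 {A : Type*} [Fintype A] [DecidableEq A] (d : ℕ) (hd : 2 ≤ d)
    (hcard : Fintype.card A = d) (π π' : Bool → A ≃ Fin d) (ε : Bool)
    (hirr : rvIrreducible d (π false) (π true))
    (hkeep : π' ε = π ε)
    (hupd : ∀ α, (π' (!ε)) α = rvUpdate d (by omega) (π ε) (π (!ε)) α) :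
    (fun v => (rvTheta d (by omega) (π ε) (π (!ε)))⁻¹.mulVec v) ''
        rvConeS d (π' false) (π' true) ⊆ rvConeS d (π false) (π true) := by

  have hd0 : 0 < d := by omega
  -- the winner and loser letters are distinct
  have hne : (π false).symm (finTop d hd0) ≠ (π true).symm (finTop d hd0) := by
    intro h
    apply hirr (d - 1) (by omega) le_rfl
    ext γ
    simp only [Set.mem_setOf_eq]
    have h0 : ∀ (p : A ≃ Fin d), ((p γ : ℕ) < d - 1 ↔ γ ≠ p.symm (finTop d hd0)) := by
      intro p
      have hb : (p γ : ℕ) < d := (p γ).isLt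
      constructor
      · intro hlt hγ
        rw [hγ, Equiv.apply_symm_apply] at hlt
        simp only [finTop] at hlt
        omega
      · intro hγ
        have hv' : (p γ : ℕ) ≠ d - 1 := fun hv => hγ (by
          rw [← p.symm_apply_apply γ]
          congr 1
          exact Fin.val_injective (by rw [hv]; rfl))
        omega
    rw [h0 (π false), h0 (π true), h]
  rintro v ⟨v', ⟨u, hu, rfl⟩, rfl⟩
  cases ε with
  | false =>
    have hM' : rvOmega d (π' false) (π' true) =
        rvTheta d hd0 (π false) (π true) * rvOmega d (π false) (π true) *
          (rvTheta d hd0 (π false) (π true))ᵀ := by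
      have h1 : π' false = π false := hkeep
      rw [h1]
      exact key hd hd0 (π false) (π true) (π' true) hupd hne
    exact cone_step hd0 (π false) (π true) (π false) (π true) hne _ hM' u hu
  | true =>
    have hM' : rvOmega d (π' false) (π' true) =
        rvTheta d hd0 (π true) (π false) * rvOmega d (π false) (π true) *
          (rvTheta d hd0 (π true) (π false))ᵀ := by
      have h1 : π' true = π true := hkeep
      rw [h1]
      exact key' hd hd0 (π true) (π false) (π' false) hupd (Ne.symm hne)
    exact cone_step hd0 (π false) (π true) (π true) (π false) (Ne.symm hne) _ hM' u hu
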